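/- Let n ≥ 1, let A ⊆ ℝⁿ be a closed set, and let L ⊆ ℝⁿ be a line such that L ∩ ∂A is finite and every point of L ∩ ∂A lies in the closure of L ∖ A, where ∂A denotes the topological frontier of A in ℝⁿ. Then L ∩ A has finitely many connected components, and the cardinality of L ∩ ∂A is at most 2 times the number of connected components of L ∩ A. -/

import Mathlib

open Set Topology

lemma my_embed_image_connectedComponentIn {α β : Type*} [TopologicalSpace α] [TopologicalSpace β]
    {f : α → β} (hf : Topology.IsEmbedding f) {s : Set α} {x : α} (hx : x ∈ s) :
    f '' connectedComponentIn s x = connectedComponentIn (f '' s) (f x) := by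
  refine (hf.continuous.image_connectedComponentIn_subset hx).antisymm ?_
  set T := connectedComponentIn (f '' s) (f x) with hT
  have hTsub : T ⊆ f '' s := connectedComponentIn_subset _ _
  have hTr : T ⊆ Set.range f := hTsub.trans (image_subset_range _ _)
  have himg : f '' (f ⁻¹' T) = T := Set.image_preimage_eq_of_subset hTr
  have hpre : IsPreconnected (f ⁻¹' T) := by
    rw [← hf.isInducing.isPreconnected_image, himg]
    exact isPreconnected_connectedComponentIn
  have hxT : x ∈ f ⁻¹' T := by
    simp only [mem_preimage]
    exact mem_connectedComponentIn (mem_image_of_mem f hx)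
  have hsub : f ⁻¹' T ⊆ s := by
    intro b hb
    obtain ⟨b', hb', he⟩ := hTsub hb
    rwa [← hf.injective he]
  calc T = f '' (f ⁻¹' T) := himg.symm
    _ ⊆ f '' connectedComponentIn s x :=
      image_mono (hpre.subset_connectedComponentIn hxT hsub)

lemma my_real_core (S : Set ℝ) (hS : IsClosed S) (hf : (frontier S).Finite) :
    {C : Set ℝ | ∃ x ∈ S, C = connectedComponentIn S x}.Finite ∧
    (frontier S).ncard ≤ 2 * {C : Set ℝ | ∃ x ∈ S, C = connectedComponentIn S x}.ncard := by
  have hfr : frontier S = S \ interior S := hS.frontier_eq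
  -- every component is closed
  have hclosed : ∀ x ∈ S, IsClosed (connectedComponentIn S x) := by
    intro x hx
    have h1 : closure (connectedComponentIn S x) ⊆ connectedComponentIn S x :=
      isPreconnected_connectedComponentIn.closure.subset_connectedComponentIn
        (subset_closure (mem_connectedComponentIn hx))
        ((closure_mono (connectedComponentIn_subset S x)).trans hS.closure_subset)
    exact isClosed_of_closure_subset h1
  -- a component missing the frontier forces S = univ
  have claim2 : ∀ x ∈ S, connectedComponentIn S x ∩ frontier S = ∅ → S = univ := by
    intro x hx hdisj
    set C := connectedComponentIn S x with hC
    have hCint : C ⊆ interior S := by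
      intro y hy
      have hyS : y ∈ S := connectedComponentIn_subset S x hy
      by_contra hyi
      have : y ∈ C ∩ frontier S := ⟨hy, by rw [hfr]; exact ⟨hyS, hyi⟩⟩
      rw [hdisj] at this; exact this
    have hopen : IsOpen C := by
      rw [Metric.isOpen_iff]
      intro y hy
      obtain ⟨ε, hε, hball⟩ := Metric.isOpen_iff.1 isOpen_interior y (hCint hy)
      refine ⟨ε, hε, ?_⟩
      have hpc : IsPreconnected (Metric.ball y ε) := by
        rw [Real.ball_eq_Ioo]; exact isPreconnected_Ioo
      have : Metric.ball y ε ⊆ connectedComponentIn S y :=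
        hpc.subset_connectedComponentIn (Metric.mem_ball_self hε)
          (hball.trans interior_subset)
      rwa [← connectedComponentIn_eq hy] at this
    have hclopen : IsClopen C := ⟨hclosed x hx, hopen⟩
    have hCuniv : C = univ := hclopen.eq_univ ⟨x, mem_connectedComponentIn hx⟩
    have hsub' : C ⊆ S := connectedComponentIn_subset S x
    rw [hCuniv] at hsub'
    exact univ_subset_iff.mp hsub'
  by_cases hU : S = univ
  · subst hU
    have h1 : {C : Set ℝ | ∃ x ∈ univ, C = connectedComponentIn univ x} ⊆ {univ} := by
      intro C hC
      obtain ⟨x, -, rfl⟩ := hC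
      rw [connectedComponentIn_univ, mem_singleton_iff]
      exact PreconnectedSpace.connectedComponent_eq_univ x
    refine ⟨(finite_singleton _).subset h1, ?_⟩
    simp
  · -- every component meets the frontier
    have hmeet : ∀ x ∈ S, (connectedComponentIn S x ∩ frontier S).Nonempty := by
      intro x hx
      rcases eq_empty_or_nonempty (connectedComponentIn S x ∩ frontier S) with h | h
      · exact absurd (claim2 x hx h) hU
      · exact h
    set 𝒞 := {C : Set ℝ | ∃ x ∈ S, C = connectedComponentIn S x} with h𝒞def
    have h𝒞sub : 𝒞 ⊆ (fun y => connectedComponentIn S y) '' frontier S := by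
      rintro C ⟨x, hx, rfl⟩
      obtain ⟨y, hyC, hyf⟩ := hmeet x hx
      exact ⟨y, hyf, (connectedComponentIn_eq hyC).symm⟩
    have h𝒞fin : 𝒞.Finite := (hf.image _).subset h𝒞sub
    refine ⟨h𝒞fin, ?_⟩
    classical
    set g : ℝ → Set ℝ := fun y => connectedComponentIn S y with hg
    set F : Finset ℝ := hf.toFinset with hF
    have key : ∀ C ∈ F.image g, (F.filter (fun y => g y = C)).card ≤ 2 := by
      intro C _
      set P := F.filter (fun y => g y = C) with hP
      rcases P.eq_empty_or_nonempty with h | hne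
      · simp [h]
      have hmem : ∀ b ∈ P, b ∈ frontier S ∧ g b = C := by
        intro b hb
        rw [hP, Finset.mem_filter] at hb
        exact ⟨(Set.Finite.mem_toFinset hf).1 hb.1, hb.2⟩
      set a := P.min' hne with ha
      set c := P.max' hne with hc
      have haP := P.min'_mem hne
      have hcP := P.max'_mem hne
      have hsub : P ⊆ {a, c} := by
        intro b hb
        have hab : a ≤ b := P.min'_le b hb
        have hbc : b ≤ c := P.le_max' b hb
        rcases eq_or_lt_of_le hab with h1 | h1
        · simp [← h1]
        rcases eq_or_lt_of_le hbc with h2 | h2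
        · simp [h2]
        exfalso
        obtain ⟨haf, haC⟩ := hmem a haP
        obtain ⟨hcf, hcC⟩ := hmem c hcP
        obtain ⟨hbf, hbC⟩ := hmem b hb
        have haS : a ∈ S := (hfr ▸ haf).1
        have hcS : c ∈ S := (hfr ▸ hcf).1
        have haC' : a ∈ C := haC ▸ mem_connectedComponentIn haS
        have hcC' : c ∈ C := hcC ▸ mem_connectedComponentIn hcS
        have hCpre : IsPreconnected C := haC ▸ isPreconnected_connectedComponentIn
        have hord : Set.OrdConnected C := hCpre.ordConnected
        have hIcc : Set.Icc a c ⊆ C := hord.out haC' hcC'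
        have hCS : C ⊆ S := haC ▸ connectedComponentIn_subset S a
        have hIoo : Set.Ioo a c ⊆ interior S :=
          interior_maximal ((Set.Ioo_subset_Icc_self.trans hIcc).trans hCS) isOpen_Ioo
        have hbint : b ∈ interior S := hIoo ⟨h1, h2⟩
        exact (hfr ▸ hbf).2 hbint
      calc P.card ≤ ({a, c} : Finset ℝ).card := Finset.card_le_card hsub
        _ ≤ 2 := Finset.card_insert_le .. |>.trans (by simp)
    have hcard : F.card ≤ 2 * (F.image g).card := Finset.card_le_mul_card_image F 2 key
    have himgsub : ((F.image g : Finset (Set ℝ)) : Set (Set ℝ)) ⊆ 𝒞 := by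
      intro C hC
      simp only [Finset.coe_image, mem_image, Finset.mem_coe] at hC
      obtain ⟨y, hy, rfl⟩ := hC
      have hyf : y ∈ frontier S := (Set.Finite.mem_toFinset hf).1 hy
      exact ⟨y, (hfr ▸ hyf).1, rfl⟩
    have h1 : (frontier S).ncard = F.card := by
      rw [hF, Set.ncard_eq_toFinset_card _ hf]
    have h2 : (F.image g).card ≤ 𝒞.ncard := by
      have := Set.ncard_le_ncard himgsub h𝒞fin
      rwa [Set.ncard_coe_finset] at this
    rw [h1]
    calc F.card ≤ 2 * (F.image g).card := hcard
      _ ≤ 2 * 𝒞.ncard := by omega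

theorem stmt4 (n : ℕ) (hn : 1 ≤ n) (A : Set (Fin n → ℝ)) (hA : IsClosed A)
    (u v : Fin n → ℝ) (hv : v ≠ 0)
    (L : Set (Fin n → ℝ)) (hL : L = Set.range fun t : ℝ => u + t • v)
    (hfin : (L ∩ frontier A).Finite)
    (htrans : ∀ x ∈ L ∩ frontier A, x ∈ closure (L \ A)) :
    {C : Set (Fin n → ℝ) | ∃ x ∈ L ∩ A, C = connectedComponentIn (L ∩ A) x}.Finite ∧
    (L ∩ frontier A).ncard ≤
      2 * {C : Set (Fin n → ℝ) | ∃ x ∈ L ∩ A, C = connectedComponentIn (L ∩ A) x}.ncard := by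
  classical
  set φ : ℝ → (Fin n → ℝ) := fun t => u + t • v with hφ
  obtain ⟨i, hi⟩ : ∃ i, v i ≠ 0 := Function.ne_iff.mp hv
  set ψ : (Fin n → ℝ) → ℝ := fun x => (x i - u i) / (v i) with hψ
  have hleft : Function.LeftInverse ψ φ := by
    intro t
    simp only [hψ, hφ, Pi.add_apply, Pi.smul_apply, smul_eq_mul]
    field_simp
    ring
  have hφcont : Continuous φ := continuous_const.add (continuous_id.smul continuous_const)
  have hψcont : Continuous ψ :=
    ((continuous_apply i).sub continuous_const).div_const _
  have hcemb : IsClosedEmbedding φ := hleft.isClosedEmbedding hψcont hφcont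
  have hinj : Function.Injective φ := hcemb.injective
  set S : Set ℝ := φ ⁻¹' A with hS
  have hScl : IsClosed S := hA.preimage hφcont
  have hLr : L = Set.range φ := hL
  have hIA : L ∩ A = φ '' S := by
    rw [hLr, hS, Set.image_preimage_eq_range_inter]
  have hcompl : φ '' Sᶜ = L \ A := by
    have : Sᶜ = φ ⁻¹' Aᶜ := rfl
    rw [this, Set.image_preimage_eq_range_inter, ← hLr, Set.diff_eq]
  have hfr : L ∩ frontier A = φ '' frontier S := by
    apply Set.Subset.antisymm
    · intro x hx
      have hx' := htrans x hx
      rw [← hcompl, hcemb.closure_image_eq] at hx'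
      obtain ⟨t, htc, rfl⟩ := hx'
      refine ⟨t, ?_, rfl⟩
      rw [frontier_eq_closure_inter_closure, hScl.closure_eq]
      refine ⟨?_, htc⟩
      exact hA.frontier_subset hx.2
    · rintro x ⟨t, ht, rfl⟩
      rw [hScl.frontier_eq] at ht
      refine ⟨hLr ▸ Set.mem_range_self t, ?_⟩
      rw [hA.frontier_eq]
      refine ⟨ht.1, fun hint => ?_⟩
      have : t ∈ interior S :=
        interior_maximal (Set.preimage_mono interior_subset)
          (isOpen_interior.preimage hφcont) hint
      exact ht.2 this
  have hSfin : (frontier S).Finite := by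
    have h1 : (φ ⁻¹' (L ∩ frontier A)).Finite := hfin.preimage hinj.injOn
    apply h1.subset
    intro t ht
    rw [Set.mem_preimage, hfr]
    exact Set.mem_image_of_mem φ ht
  obtain ⟨hCfin, hineq⟩ := my_real_core S hScl hSfin
  have hsetseq : {C : Set (Fin n → ℝ) | ∃ x ∈ L ∩ A, C = connectedComponentIn (L ∩ A) x} =
      (Set.image φ) '' {C : Set ℝ | ∃ x ∈ S, C = connectedComponentIn S x} := by
    ext C
    constructor
    · rintro ⟨x, hx, rfl⟩
      rw [hIA] at hx
      obtain ⟨t, ht, rfl⟩ := hx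
      refine ⟨connectedComponentIn S t, ⟨t, ht, rfl⟩, ?_⟩
      rw [my_embed_image_connectedComponentIn hcemb.toIsEmbedding ht, ← hIA]
    · rintro ⟨D, ⟨t, ht, rfl⟩, rfl⟩
      refine ⟨φ t, hIA ▸ Set.mem_image_of_mem φ ht, ?_⟩
      rw [hIA, ← my_embed_image_connectedComponentIn hcemb.toIsEmbedding ht]
  constructor
  · rw [hsetseq]; exact hCfin.image _
  · rw [hsetseq, hfr, Set.ncard_image_of_injective _ hinj,
      Set.ncard_image_of_injective _ (Set.image_injective.mpr hinj)]
    exact hineq
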